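/- Let α, β, γ, Γ ∈ ℝ, h(u) = (α+Γ)u + (β/3)u³ + (γ/4)u⁴, and let u : ℝ → ℝ be three times continuously differentiable with u(x) → 0, u'(x) → 0 and u''(x) → 0 as x → ±∞. Then the improper integral ∫_{−∞}^{∞} u(x)·[ h'(u(x))u'(x) − (u(x)+Γ)(u'(x) − u'''(x)) − 2u'(x)(u(x) − u''(x)) ] dx exists and equals 0. -/

import Mathlib

open Filter

/-- Pointwise-in-time identity underlying conservation of the `H¹`-norm: with
`h(u) = (α+Γ)u + (β/3)u³ + (γ/4)u⁴` (so `h'(v) = (α+Γ) + βv² + γv³`) and `u`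
three times continuously differentiable with `u, u', u'' → 0` at `±∞`, the
improper integral
`∫_{-∞}^{∞} u·[h'(u)u' - (u+Γ)(u' - u''') - 2u'(u - u'')] dx` exists and equals `0`. -/
theorem conservation_of_H1_integrand
    (α β γ Γ : ℝ)
    (h' : ℝ → ℝ) (hh' : ∀ v : ℝ, h' v = (α + Γ) + β * v ^ 2 + γ * v ^ 3)
    (u : ℝ → ℝ) (hu : ContDiff ℝ 3 u)
    (hu_top : Filter.Tendsto u Filter.atTop (nhds 0))
    (hu_bot : Filter.Tendsto u Filter.atBot (nhds 0))
    (hu'_top : Filter.Tendsto (deriv u) Filter.atTop (nhds 0))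
    (hu'_bot : Filter.Tendsto (deriv u) Filter.atBot (nhds 0))
    (hu''_top : Filter.Tendsto (deriv (deriv u)) Filter.atTop (nhds 0))
    (hu''_bot : Filter.Tendsto (deriv (deriv u)) Filter.atBot (nhds 0)) :
    Filter.Tendsto
      (fun ab : ℝ × ℝ => ∫ x in (-ab.1)..ab.2,
        u x * (h' (u x) * deriv u x
          - (u x + Γ) * (deriv u x - deriv (deriv (deriv u)) x)
          - 2 * deriv u x * (u x - deriv (deriv u) x)))
      (Filter.atTop ×ˢ Filter.atTop) (nhds 0) := by
  set u1 := deriv u with hu1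
  set u2 := deriv u1 with hu2
  set u3 := deriv u2 with hu3
  -- smoothness facts
  have h1 : ContDiff ℝ 2 u1 := by
    rw [hu1]
    rw [show (3 : WithTop ℕ∞) = 2 + 1 from rfl] at hu
    exact (contDiff_succ_iff_deriv.mp hu).2.2
  have h2 : ContDiff ℝ 1 u2 := by
    rw [hu2]
    rw [show (2 : WithTop ℕ∞) = 1 + 1 from rfl] at h1
    exact (contDiff_succ_iff_deriv.mp h1).2.2
  have h3 : Continuous u3 := by
    rw [hu3]
    exact (contDiff_one_iff_deriv.mp h2).2
  have du : ∀ x, HasDerivAt u (u1 x) x := fun x =>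
    (hu.differentiable (by norm_num)).differentiableAt.hasDerivAt
  have du1 : ∀ x, HasDerivAt u1 (u2 x) x := fun x =>
    (h1.differentiable (by norm_num)).differentiableAt.hasDerivAt
  have du2 : ∀ x, HasDerivAt u2 (u3 x) x := fun x =>
    (h2.differentiable (by norm_num)).differentiableAt.hasDerivAt
  -- the antiderivative
  set G : ℝ × ℝ × ℝ → ℝ := fun p =>
    (α + Γ) / 2 * p.1 ^ 2 + β / 4 * p.1 ^ 4 + γ / 5 * p.1 ^ 5 - p.1 ^ 3
      - Γ / 2 * p.1 ^ 2 + p.1 ^ 2 * p.2.2 + Γ * (p.1 * p.2.2 - p.2.1 ^ 2 / 2) with hG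
  set F : ℝ → ℝ := fun x => G (u x, u1 x, u2 x) with hF
  set g : ℝ → ℝ := fun x =>
    u x * (h' (u x) * u1 x - (u x + Γ) * (u1 x - u3 x) - 2 * u1 x * (u x - u2 x)) with hg
  have hderiv : ∀ x, HasDerivAt F (g x) x := by
    intro x
    have : HasDerivAt F
        ((α + Γ) / 2 * (2 * u x ^ 1 * u1 x) + β / 4 * (4 * u x ^ 3 * u1 x)
          + γ / 5 * (5 * u x ^ 4 * u1 x) - 3 * u x ^ 2 * u1 x
          - Γ / 2 * (2 * u x ^ 1 * u1 x)
          + ((2 * u x ^ 1 * u1 x) * u2 x + u x ^ 2 * u3 x)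
          + Γ * ((u1 x * u2 x + u x * u3 x) - 2 * u1 x ^ 1 * u2 x / 2)) x := by
      exact ((((((((du x).pow 2).const_mul ((α + Γ) / 2)).add
        (((du x).pow 4).const_mul (β / 4))).add
        (((du x).pow 5).const_mul (γ / 5))).sub
        (((du x).pow 3).congr_deriv (by ring))).sub
        (((du x).pow 2).const_mul (Γ / 2))).add
        (((du x).pow 2).mul (du2 x))).add
        ((((du x).mul (du2 x)).sub (((du1 x).pow 2).div_const 2)).const_mul Γ)
    convert this using 1
    simp only [hg, hh']
    ring
  have hgc : Continuous g := by
    have hcu := hu.continuous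
    have hcu1 := h1.continuous
    have hcu2 := h2.continuous
    rw [hg]
    simp only [hh']
    fun_prop
  -- the integral equals F b - F (-a)
  have key : ∀ a b : ℝ, (∫ x in (-a)..b, g x) = F b - F (-a) := by
    intro a b
    exact intervalIntegral.integral_eq_sub_of_hasDerivAt (fun x _ => hderiv x)
      (hgc.intervalIntegrable _ _)
  have hGc : Continuous G := by rw [hG]; fun_prop
  have hF_top : Tendsto F atTop (nhds 0) := by
    have hvec : Tendsto (fun x => (u x, u1 x, u2 x)) atTop
        (nhds ((0 : ℝ), (0 : ℝ), (0 : ℝ))) :=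
      hu_top.prodMk_nhds (hu'_top.prodMk_nhds hu''_top)
    have := (hGc.tendsto _).comp hvec
    simpa [hG, hF, Function.comp_def] using this
  have hF_bot : Tendsto F atBot (nhds 0) := by
    have hvec : Tendsto (fun x => (u x, u1 x, u2 x)) atBot
        (nhds ((0 : ℝ), (0 : ℝ), (0 : ℝ))) :=
      hu_bot.prodMk_nhds (hu'_bot.prodMk_nhds hu''_bot)
    have := (hGc.tendsto _).comp hvec
    simpa [hG, hF, Function.comp_def] using this
  have hfin : Tendsto (fun ab : ℝ × ℝ => F ab.2 - F (-ab.1))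
      (atTop ×ˢ atTop) (nhds 0) := by
    have h2' : Tendsto (fun ab : ℝ × ℝ => F ab.2) (atTop ×ˢ atTop) (nhds 0) :=
      hF_top.comp tendsto_snd
    have h1' : Tendsto (fun ab : ℝ × ℝ => F (-ab.1)) (atTop ×ˢ atTop) (nhds 0) :=
      hF_bot.comp (tendsto_neg_atTop_atBot.comp tendsto_fst)
    simpa using h2'.sub h1'
  refine hfin.congr ?_
  intro ab
  exact (key ab.1 ab.2).symm
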